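/- If n is an odd prime and k is a positive integer, then there exists a bijection between N_{n,k} (the set of rotation-classes of (n,k)-codes, i.e., binary necklaces with n black beads and k white beads) and F_{n,k,0} (the set of (n,k)-codes with weighted sum 0 in ZMod n). -/

import Mathlib

open Finset

/-- An `(n,k)`-code: `f : ZMod n → ℕ` with total sum `k`. -/
def IsCode (n : ℕ) [NeZero n] (k : ℕ) (f : ZMod n → ℕ) : Prop :=
  ∑ i : ZMod n, f i = k

/-- The weighted sum `W(f) = ∑ i · f(i)` in `ZMod n`. -/
def wsum (n : ℕ) [NeZero n] (f : ZMod n → ℕ) : ZMod n :=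
  ∑ i : ZMod n, i * (f i : ZMod n)

/-- The rotation `c`, defined by `(c f) i = f (i+1)`. -/
def rot (n : ℕ) [NeZero n] (f : ZMod n → ℕ) : ZMod n → ℕ := fun i => f (i + 1)

/-- A code is aperiodic (has period `n`) if `c^j f = f` implies `n ∣ j`. -/
def Aperiodic (n : ℕ) [NeZero n] (f : ZMod n → ℕ) : Prop :=
  ∀ j : ℕ, (rot n)^[j] f = f → n ∣ j

/-- The rotation class (orbit under `c`) of a code. -/
def rotOrbit (n : ℕ) [NeZero n] (f : ZMod n → ℕ) : Set (ZMod n → ℕ) :=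
  {g | ∃ j : ℕ, (rot n)^[j] f = g}


/-- The set `N_{n,k}` of binary necklaces with `n` black and `k` white beads,
realized as rotation-classes of `(n,k)`-codes. -/
def necklaces (n k : ℕ) [NeZero n] : Set (Set (ZMod n → ℕ)) :=
  {S | ∃ f : ZMod n → ℕ, IsCode n k f ∧ S = rotOrbit n f}

set_option linter.unusedSectionVars false

section Aux

variable (n : ℕ) [NeZero n]

/-- Shift of a code by `t`. -/
def shiftc (t : ZMod n) (f : ZMod n → ℕ) : ZMod n → ℕ := fun i => f (i + t)

variable {n}

lemma shiftc_shiftc (t s : ZMod n) (f : ZMod n → ℕ) :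
    shiftc n t (shiftc n s f) = shiftc n (t + s) f := by
  funext i; simp [shiftc, add_assoc, add_comm s t]

lemma rot_iterate (j : ℕ) (f : ZMod n → ℕ) :
    (rot n)^[j] f = shiftc n (j : ZMod n) f := by
  induction j with
  | zero => funext i; simp [shiftc]
  | succ m ih =>
      rw [Function.iterate_succ_apply', ih]
      funext i
      simp [rot, shiftc, add_assoc]
      ring_nf

lemma mem_rotOrbit_iff (f g : ZMod n → ℕ) :
    g ∈ rotOrbit n f ↔ ∃ t : ZMod n, shiftc n t f = g := by
  constructor
  · rintro ⟨j, rfl⟩; exact ⟨(j : ZMod n), (rot_iterate j f).symm⟩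
  · rintro ⟨t, rfl⟩
    exact ⟨t.val, by rw [rot_iterate, ZMod.natCast_val, ZMod.cast_id]⟩

lemma shiftc_mem_rotOrbit (t : ZMod n) (f : ZMod n → ℕ) :
    shiftc n t f ∈ rotOrbit n f :=
  (mem_rotOrbit_iff f _).2 ⟨t, rfl⟩

lemma shiftc_zero (f : ZMod n → ℕ) : shiftc n 0 f = f := by
  funext i; simp [shiftc]

lemma self_mem_rotOrbit (f : ZMod n → ℕ) : f ∈ rotOrbit n f := by
  have := shiftc_mem_rotOrbit (0 : ZMod n) f
  rwa [shiftc_zero] at this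

lemma rotOrbit_shiftc (t : ZMod n) (f : ZMod n → ℕ) :
    rotOrbit n (shiftc n t f) = rotOrbit n f := by
  ext g
  simp only [mem_rotOrbit_iff]
  constructor
  · rintro ⟨s, rfl⟩; exact ⟨s + t, by rw [← shiftc_shiftc]⟩
  · rintro ⟨s, rfl⟩
    exact ⟨s - t, by rw [shiftc_shiftc, sub_add_cancel]⟩

lemma rotOrbit_eq_iff_mem {f g : ZMod n → ℕ} :
    rotOrbit n g = rotOrbit n f ↔ g ∈ rotOrbit n f := by
  constructor
  · intro h; rw [← h]; exact self_mem_rotOrbit g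
  · intro h
    obtain ⟨t, rfl⟩ := (mem_rotOrbit_iff f g).1 h
    exact rotOrbit_shiftc t f

variable (k : ℕ)

lemma isCode_shiftc (t : ZMod n) (f : ZMod n → ℕ) (hf : IsCode n k f) :
    IsCode n k (shiftc n t f) := by
  unfold IsCode at *
  rw [← hf]
  exact Fintype.sum_equiv (Equiv.addRight t) _ _ (fun i => rfl)

lemma wsum_shiftc (t : ZMod n) (f : ZMod n → ℕ) (hf : IsCode n k f) :
    wsum n (shiftc n t f) = wsum n f - t * k := by
  unfold wsum shiftc
  have h1 : ∑ i : ZMod n, i * ((f (i + t) : ZMod n)) =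
      ∑ j : ZMod n, (j - t) * ((f j : ZMod n)) :=
    Fintype.sum_equiv (Equiv.addRight t) _ _ (fun i => by simp)
  rw [h1]
  have h2 : ∑ j : ZMod n, (j - t) * ((f j : ZMod n)) =
      ∑ j : ZMod n, (j * (f j : ZMod n) - t * (f j : ZMod n)) := by
    apply Finset.sum_congr rfl; intro j _; ring
  rw [h2, Finset.sum_sub_distrib, ← Finset.mul_sum]
  congr 1
  have : ((∑ j : ZMod n, f j : ℕ) : ZMod n) = ∑ j : ZMod n, (f j : ZMod n) := by
    push_cast; rfl
  rw [← this, hf]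

end Aux
section Aux2

variable {n k : ℕ} [NeZero n]

lemma constant_of_shiftc_eq (hn : n.Prime) {t : ZMod n} (ht : t ≠ 0) {f : ZMod n → ℕ}
    (hfix : shiftc n t f = f) : ∀ i j : ZMod n, f i = f j := by
  haveI : Fact n.Prime := ⟨hn⟩
  have step : ∀ x : ZMod n, f (x + t) = f x := fun x => congrFun hfix x
  have key : ∀ (m : ℕ) (i : ZMod n), f (i + m • t) = f i := by
    intro m
    induction m with
    | zero => intro i; simp
    | succ m ih =>
        intro i
        have : i + (m + 1) • t = (i + m • t) + t := by
          rw [succ_nsmul]; ring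
        rw [this, step, ih]
  intro i j
  have hrepr : i + (((j - i) * t⁻¹).val : ℕ) • t = j := by
    have : ((((j - i) * t⁻¹).val : ℕ) : ZMod n) = (j - i) * t⁻¹ := by
      rw [ZMod.natCast_val, ZMod.cast_id]
    rw [nsmul_eq_mul, this, mul_assoc, inv_mul_cancel₀ ht, mul_one]
    ring
  rw [← hrepr, key]

lemma shiftc_eq_of_constant {f : ZMod n → ℕ} (hc : ∀ i j : ZMod n, f i = f j)
    (t : ZMod n) : shiftc n t f = f := by
  funext i; exact hc (i + t) i

lemma rotOrbit_of_constant {f : ZMod n → ℕ} (hc : ∀ i j : ZMod n, f i = f j) :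
    rotOrbit n f = {f} := by
  ext g
  rw [mem_rotOrbit_iff]
  constructor
  · rintro ⟨t, rfl⟩; rw [shiftc_eq_of_constant hc]; rfl
  · rintro rfl; exact ⟨0, shiftc_zero _⟩

lemma shiftc_injective_of_nonconst (hn : n.Prime) {f : ZMod n → ℕ}
    (hnc : ¬ ∀ i j : ZMod n, f i = f j) :
    Function.Injective (fun t : ZMod n => shiftc n t f) := by
  intro t s h
  have h' : shiftc n t f = shiftc n s f := h
  by_contra hts
  apply hnc
  have h2 : shiftc n (-s) (shiftc n t f) = shiftc n (-s) (shiftc n s f) := by rw [h']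
  rw [shiftc_shiftc, shiftc_shiftc, neg_add_cancel, shiftc_zero] at h2
  have h3 : shiftc n (t - s) f = f := by
    rw [show t - s = -s + t by ring]; exact h2
  exact constant_of_shiftc_eq hn (sub_ne_zero.2 hts) h3

lemma rotOrbit_eq_range (f : ZMod n → ℕ) :
    rotOrbit n f = Set.range (fun t : ZMod n => shiftc n t f) := by
  ext g; rw [mem_rotOrbit_iff]; exact ⟨fun ⟨t, h⟩ => ⟨t, h⟩, fun ⟨t, h⟩ => ⟨t, h⟩⟩

lemma rotOrbit_ncard_of_nonconst (hn : n.Prime) {f : ZMod n → ℕ}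
    (hnc : ¬ ∀ i j : ZMod n, f i = f j) :
    (rotOrbit n f).ncard = n := by
  rw [rotOrbit_eq_range, ← Set.image_univ,
    Set.ncard_image_of_injective _ (shiftc_injective_of_nonconst hn hnc),
    Set.ncard_univ, Nat.card_eq_fintype_card, ZMod.card]

lemma sum_univ_zmod_eq_zero (hn : n.Prime) (hodd : Odd n) :
    ∑ i : ZMod n, i = 0 := by
  haveI : Fact n.Prime := ⟨hn⟩
  have h : ∑ i : ZMod n, i = ∑ i : ZMod n, -i :=
    Fintype.sum_equiv (Equiv.neg _) _ _ (fun i => by simp)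
  have h2 : (2 : ZMod n) * ∑ i : ZMod n, i = 0 := by
    rw [two_mul]
    nth_rewrite 2 [h]
    rw [← Finset.sum_add_distrib]
    simp
  have h2ne : (2 : ZMod n) ≠ 0 := by
    have := (ZMod.natCast_eq_zero_iff 2 n)
    intro hc
    rw [show ((2 : ZMod n)) = ((2 : ℕ) : ZMod n) by push_cast; rfl] at hc
    have hdvd := this.1 hc
    have hn2 : n = 2 := (Nat.prime_dvd_prime_iff_eq hn Nat.prime_two).1 hdvd
    rw [hn2] at hodd
    exact (by norm_num : ¬ Odd 2) hodd
  rcases mul_eq_zero.1 h2 with h' | h'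
  · exact absurd h' h2ne
  · exact h'

/-- The uniform (constant) code. -/
def uniformCode (n k : ℕ) [NeZero n] : ZMod n → ℕ := fun _ => k / n

lemma uniformCode_isCode (hdvd : n ∣ k) : IsCode n k (uniformCode n k) := by
  unfold IsCode uniformCode
  rw [Finset.sum_const, Finset.card_univ, ZMod.card, smul_eq_mul,
    Nat.mul_div_cancel' hdvd]

lemma wsum_of_constant (hn : n.Prime) (hodd : Odd n) (m : ℕ) :
    wsum n (fun _ => m) = 0 := by
  unfold wsum
  rw [← Finset.sum_mul, sum_univ_zmod_eq_zero hn hodd, zero_mul]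

lemma constant_code_eq_uniform {f : ZMod n → ℕ} (hf : IsCode n k f)
    (hc : ∀ i j : ZMod n, f i = f j) : n ∣ k ∧ f = uniformCode n k := by
  have hsum : ∑ i : ZMod n, f i = n * f 0 := by
    rw [Finset.sum_congr rfl (fun i _ => hc i 0), Finset.sum_const, Finset.card_univ,
      ZMod.card, smul_eq_mul]
  have hk : k = n * f 0 := by rw [← hf, hsum]
  constructor
  · exact ⟨f 0, hk⟩
  · funext i
    unfold uniformCode
    rw [hk, Nat.mul_div_cancel_left _ (Nat.pos_of_ne_zero (NeZero.ne n))]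
    exact hc i 0

end Aux2
section Analytic

open PowerSeries Polynomial

/-- Geometric series `∑ a^m X^m`. -/
noncomputable def geomS (a : ℂ) : PowerSeries ℂ := PowerSeries.mk fun m => a ^ m

lemma one_sub_C_mul_X_mul_geomS (a : ℂ) :
    (1 - PowerSeries.C a * PowerSeries.X) * geomS a = 1 := by
  ext d
  rw [sub_mul, one_mul, map_sub, mul_assoc]
  cases d with
  | zero =>
      rw [PowerSeries.coeff_C_mul, PowerSeries.coeff_zero_X_mul]
      simp [geomS]
  | succ m =>
      rw [PowerSeries.coeff_C_mul, PowerSeries.coeff_succ_X_mul]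
      simp [geomS, PowerSeries.coeff_one, pow_succ, mul_comm]

/-- Indicator series `∑_{n ∣ m} X^m`. -/
noncomputable def indS (n : ℕ) : PowerSeries ℂ :=
  PowerSeries.mk fun m => if n ∣ m then 1 else 0

lemma one_sub_X_pow_mul_indS {n : ℕ} (hn : 0 < n) :
    (1 - (PowerSeries.X : PowerSeries ℂ) ^ n) * indS n = 1 := by
  ext d
  rw [sub_mul, one_mul, map_sub]
  rcases lt_or_ge d n with h | h
  · have hz : PowerSeries.coeff d ((PowerSeries.X : PowerSeries ℂ) ^ n * indS n) = 0 := by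
      rw [PowerSeries.coeff_mul]
      apply Finset.sum_eq_zero
      rintro ⟨i, j⟩ hij
      rw [Finset.HasAntidiagonal.mem_antidiagonal] at hij
      rw [PowerSeries.coeff_X_pow, if_neg, zero_mul]
      omega
    rw [hz, sub_zero]
    rcases Nat.eq_zero_or_pos d with rfl | hd
    · simp [indS]
    · have : ¬ n ∣ d := Nat.not_dvd_of_pos_of_lt hd h
      simp [indS, this, PowerSeries.coeff_one, hd.ne']
  · obtain ⟨e, rfl⟩ : ∃ e, d = e + n := ⟨d - n, by omega⟩
    rw [PowerSeries.coeff_X_pow_mul]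
    have hdvd : n ∣ e + n ↔ n ∣ e := by
      constructor
      · intro h'
        have := Nat.dvd_sub h' (dvd_refl n)
        simpa using this
      · intro h'
        exact Nat.dvd_add h' (dvd_refl n)
    have hne : e + n ≠ 0 := by omega
    simp only [indS, PowerSeries.coeff_mk, PowerSeries.coeff_one, hdvd, if_neg hne]
    split_ifs <;> ring

lemma prod_neg_local {α β : Type*} [CommRing β] (s : Finset α) (g : α → β) :
    ∏ x ∈ s, (-g x) = (-1) ^ s.card * ∏ x ∈ s, g x := by
  rw [← Finset.prod_const, ← Finset.prod_mul_distrib]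
  exact Finset.prod_congr rfl fun x _ => by ring

lemma prod_nthRoots_eq_one {n : ℕ} (hn : 0 < n) (hodd : Odd n) {ζ : ℂ}
    (hζ : IsPrimitiveRoot ζ n) :
    ∏ x ∈ nthRootsFinset n (1 : ℂ), x = 1 := by
  have key := X_pow_sub_one_eq_prod hn hζ
  have := congrArg (Polynomial.eval 0) key
  rw [Polynomial.eval_sub, Polynomial.eval_pow, Polynomial.eval_X, Polynomial.eval_one,
    Polynomial.eval_prod] at this
  simp only [Polynomial.eval_sub, Polynomial.eval_X, Polynomial.eval_C, zero_sub] at this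
  rw [prod_neg_local, hζ.card_nthRootsFinset, hodd.neg_one_pow, zero_pow hn.ne',
    zero_sub] at this
  linear_combination this

lemma prod_one_sub_root_mul_X {n : ℕ} (hn : 0 < n) (hodd : Odd n) {ζ : ℂ}
    (hζ : IsPrimitiveRoot ζ n) :
    ∏ x ∈ nthRootsFinset n (1 : ℂ), (1 - Polynomial.C x * Polynomial.X) =
      1 - (Polynomial.X : ℂ[X]) ^ n := by
  have hmem : ∀ x ∈ nthRootsFinset n (1 : ℂ), x ^ n = 1 := fun x hx =>
    (Polynomial.mem_nthRootsFinset hn (1 : ℂ)).1 hx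
  have hne : ∀ x ∈ nthRootsFinset n (1 : ℂ), x ≠ 0 := by
    intro x hx h0
    have := hmem x hx
    rw [h0, zero_pow hn.ne'] at this
    exact zero_ne_one this
  have step : ∀ x ∈ nthRootsFinset n (1 : ℂ),
      1 - Polynomial.C x * Polynomial.X = (-Polynomial.C x) * (Polynomial.X - Polynomial.C x⁻¹) := by
    intro x hx
    rw [neg_mul, mul_sub, ← Polynomial.C_mul, mul_inv_cancel₀ (hne x hx), Polynomial.C_1]
    ring
  rw [Finset.prod_congr rfl step, Finset.prod_mul_distrib]
  have h1 : ∏ x ∈ nthRootsFinset n (1 : ℂ), (-Polynomial.C x) = -1 := by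
    rw [prod_neg_local, hζ.card_nthRootsFinset, hodd.neg_one_pow,
      ← map_prod, prod_nthRoots_eq_one hn hodd hζ, map_one]
    ring
  have h2 : ∏ x ∈ nthRootsFinset n (1 : ℂ), (Polynomial.X - Polynomial.C x⁻¹) =
      ∏ x ∈ nthRootsFinset n (1 : ℂ), (Polynomial.X - Polynomial.C x) := by
    refine Finset.prod_nbij' (fun x => x⁻¹) (fun x => x⁻¹) ?_ ?_ ?_ ?_ ?_
    · intro x hx
      rw [Polynomial.mem_nthRootsFinset hn] at *
      rw [inv_pow, hx, inv_one]
    · intro x hx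
      rw [Polynomial.mem_nthRootsFinset hn] at *
      rw [inv_pow, hx, inv_one]
    · intro x _; exact inv_inv x
    · intro x _; exact inv_inv x
    · intro x _; rfl
  rw [h1, h2, ← X_pow_sub_one_eq_prod hn hζ]
  ring

lemma prod_one_sub_root_mul_X_ps {n : ℕ} (hn : 0 < n) (hodd : Odd n) {ζ : ℂ}
    (hζ : IsPrimitiveRoot ζ n) :
    ∏ x ∈ nthRootsFinset n (1 : ℂ), (1 - PowerSeries.C x * PowerSeries.X) =
      1 - (PowerSeries.X : PowerSeries ℂ) ^ n := by
  have := congrArg (Polynomial.coeToPowerSeries.ringHom (R := ℂ))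
    (prod_one_sub_root_mul_X hn hodd hζ)
  rw [map_prod, map_sub, map_pow] at this
  simp only [map_sub, map_one, map_mul, Polynomial.coeToPowerSeries.ringHom_apply,
    Polynomial.coe_C, Polynomial.coe_X] at this
  convert this using 2

lemma prod_geomS_eq_indS {n : ℕ} (hn : 0 < n) (hodd : Odd n) {ζ : ℂ}
    (hζ : IsPrimitiveRoot ζ n) :
    ∏ x ∈ nthRootsFinset n (1 : ℂ), geomS x = indS n := by
  have h1 : (1 - (PowerSeries.X : PowerSeries ℂ) ^ n) * ∏ x ∈ nthRootsFinset n (1 : ℂ), geomS x = 1 := by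
    rw [← prod_one_sub_root_mul_X_ps hn hodd hζ, ← Finset.prod_mul_distrib]
    rw [Finset.prod_congr rfl (fun x _ => one_sub_C_mul_X_mul_geomS x), Finset.prod_const_one]
  calc ∏ x ∈ nthRootsFinset n (1 : ℂ), geomS x
      = ((1 - (PowerSeries.X : PowerSeries ℂ) ^ n) * indS n) *
          ∏ x ∈ nthRootsFinset n (1 : ℂ), geomS x := by rw [one_sub_X_pow_mul_indS hn, one_mul]
    _ = indS n * ((1 - (PowerSeries.X : PowerSeries ℂ) ^ n) *
          ∏ x ∈ nthRootsFinset n (1 : ℂ), geomS x) := by ring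
    _ = indS n := by rw [h1, mul_one]

end Analytic
section Count

open PowerSeries Polynomial

variable {n k : ℕ} [NeZero n]

/-- The set of codes with given weighted sum. -/
def codeSet (n k : ℕ) [NeZero n] (a : ZMod n) : Set (ZMod n → ℕ) :=
  {f | IsCode n k f ∧ wsum n f = a}

lemma addChar_sum {ι : Type*} (χ : AddChar (ZMod n) ℂ) (s : Finset ι) (g : ι → ZMod n) :
    χ (∑ i ∈ s, g i) = ∏ i ∈ s, χ (g i) := by
  classical
  induction s using Finset.induction_on with
  | empty => simp
  | insert _ _ h ih => rw [Finset.sum_insert h, Finset.prod_insert h, AddChar.map_add_eq_mul, ih]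

lemma codeSet_eq_image (a : ZMod n) [DecidablePred (fun l : ZMod n →₀ ℕ => wsum n ⇑l = a)] :
    codeSet n k a = (fun l : ZMod n →₀ ℕ => ⇑l) ''
      ↑((Finset.finsuppAntidiag (Finset.univ : Finset (ZMod n)) k).filter
        (fun l : ZMod n →₀ ℕ => wsum n ⇑l = a)) := by
  ext f
  constructor
  · rintro ⟨hc, hw⟩
    refine ⟨Finsupp.equivFunOnFinite.symm f, ?_, rfl⟩
    rw [Finset.mem_coe, Finset.mem_filter, Finset.mem_finsuppAntidiag]
    exact ⟨⟨hc, Finset.subset_univ _⟩, hw⟩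
  · rintro ⟨l, hl, rfl⟩
    rw [Finset.mem_coe, Finset.mem_filter, Finset.mem_finsuppAntidiag] at hl
    exact ⟨hl.1.1, hl.2⟩

lemma codeSet_ncard (a : ZMod n) [DecidablePred (fun l : ZMod n →₀ ℕ => wsum n ⇑l = a)] :
    (codeSet n k a).ncard =
      ((Finset.finsuppAntidiag (Finset.univ : Finset (ZMod n)) k).filter
        (fun l : ZMod n →₀ ℕ => wsum n ⇑l = a)).card := by
  rw [codeSet_eq_image (k := k) a,
    Set.ncard_image_of_injective _ (DFunLike.coe_injective), Set.ncard_coe_finset]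

lemma codes_eq_image :
    {f : ZMod n → ℕ | IsCode n k f} = (fun l : ZMod n →₀ ℕ => ⇑l) ''
      ↑(Finset.finsuppAntidiag (Finset.univ : Finset (ZMod n)) k) := by
  ext f
  constructor
  · intro hc
    refine ⟨Finsupp.equivFunOnFinite.symm f, ?_, rfl⟩
    rw [Finset.mem_coe, Finset.mem_finsuppAntidiag]
    exact ⟨hc, Finset.subset_univ _⟩
  · rintro ⟨l, hl, rfl⟩
    rw [Finset.mem_coe, Finset.mem_finsuppAntidiag] at hl
    exact hl.1

lemma codes_finite : {f : ZMod n → ℕ | IsCode n k f}.Finite := by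
  rw [codes_eq_image (k := k)]
  exact (Finset.finite_toSet _).image _

lemma codes_ncard :
    {f : ZMod n → ℕ | IsCode n k f}.ncard =
      (Finset.finsuppAntidiag (Finset.univ : Finset (ZMod n)) k).card := by
  rw [codes_eq_image (k := k),
    Set.ncard_image_of_injective _ (DFunLike.coe_injective), Set.ncard_coe_finset]

lemma codeSet_finite (a : ZMod n) : (codeSet n k a).Finite :=
  codes_finite.subset (fun f hf => hf.1)

lemma wsum_comp_mul (hn : n.Prime) {u : ZMod n} (hu : u ≠ 0) (f : ZMod n → ℕ) :
    wsum n (fun i => f (u⁻¹ * i)) = u * wsum n f := by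
  haveI : Fact n.Prime := ⟨hn⟩
  unfold wsum
  rw [Finset.mul_sum]
  exact (Fintype.sum_bijective (fun j : ZMod n => u * j)
    (Equiv.mulLeft₀ u hu).bijective
    (fun j => u * (j * (f j : ZMod n)))
    (fun i => i * (f (u⁻¹ * i) : ZMod n))
    (fun j => by
      show u * (j * (f j : ZMod n)) = (u * j) * (f (u⁻¹ * (u * j)) : ZMod n)
      rw [inv_mul_cancel_left₀ hu]; ring)).symm

lemma isCode_comp_mul (hn : n.Prime) {u : ZMod n} (hu : u ≠ 0) (f : ZMod n → ℕ)
    (hf : IsCode n k f) : IsCode n k (fun i => f (u⁻¹ * i)) := by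
  haveI : Fact n.Prime := ⟨hn⟩
  unfold IsCode at *
  rw [← hf]
  exact Fintype.sum_bijective (fun j : ZMod n => u⁻¹ * j)
    (Equiv.mulLeft₀ u⁻¹ (inv_ne_zero hu)).bijective _ _ (fun j => rfl)

/-- Scaling bijection: for `a ≠ 0`, there are as many codes with weighted sum `a`
as with weighted sum `1`. -/
lemma codeSet_ncard_scale (hn : n.Prime) {a : ZMod n} (ha : a ≠ 0) :
    (codeSet n k a).ncard = (codeSet n k 1).ncard := by
  haveI : Fact n.Prime := ⟨hn⟩
  have hbij : codeSet n k a =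
      (fun f : ZMod n → ℕ => fun i => f (a⁻¹ * i)) '' codeSet n k 1 := by
    ext f
    constructor
    · rintro ⟨hc, hw⟩
      refine ⟨fun i => f (a * i), ⟨?_, ?_⟩, ?_⟩
      · unfold IsCode at *
        rw [← hc]
        exact Fintype.sum_bijective (fun j : ZMod n => a * j)
          (Equiv.mulLeft₀ a ha).bijective _ _ (fun j => rfl)
      · have := wsum_comp_mul hn (inv_ne_zero ha) f
        simp only [inv_inv] at this
        have h2 : wsum n (fun i => f (a * i)) = a⁻¹ * wsum n f := by
          rw [← this]
        rw [h2, hw, inv_mul_cancel₀ ha]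
      · funext i
        show f (a * (a⁻¹ * i)) = f i
        rw [mul_inv_cancel_left₀ ha]
    · rintro ⟨g, ⟨hc, hw⟩, rfl⟩
      refine ⟨isCode_comp_mul hn ha g hc, ?_⟩
      rw [wsum_comp_mul hn ha g, hw, mul_one]
  rw [hbij]
  apply Set.ncard_image_of_injective
  intro f g h
  funext i
  have := congrFun h (a * i)
  simpa [inv_mul_cancel_left₀ ha] using this

end Count
section KeyCount

open PowerSeries Polynomial

variable {n k : ℕ} [NeZero n]

lemma codeSet_ncard_zero_eq (hn : n.Prime) (hodd : Odd n) :
    (codeSet n k 0).ncard = (codeSet n k 1).ncard + (if n ∣ k then 1 else 0) := by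
  classical
  haveI : Fact n.Prime := ⟨hn⟩
  haveI : Fact (1 < n) := ⟨hn.one_lt⟩
  have hnpos : 0 < n := hn.pos
  set ζ : ℂ := Complex.exp (2 * Real.pi * Complex.I / n) with hζdef
  have hζ : IsPrimitiveRoot ζ n := Complex.isPrimitiveRoot_exp n (NeZero.ne n)
  have hζ1 : ζ ^ n = 1 := hζ.pow_eq_one
  set χ : AddChar (ZMod n) ℂ := AddChar.zmodChar n hζ1 with hχdef
  have hχapp : ∀ a : ZMod n, χ a = ζ ^ a.val := fun a => AddChar.zmodChar_apply hζ1 a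
  set A : Finset (ZMod n →₀ ℕ) :=
    Finset.finsuppAntidiag (Finset.univ : Finset (ZMod n)) k with hAdef
  -- step 1 : character of the weighted sum as a product
  have hstep1 : ∀ l : ZMod n →₀ ℕ, χ (wsum n ⇑l) = ∏ j : ZMod n, (χ j) ^ (l j) := by
    intro l
    unfold wsum
    rw [addChar_sum]
    refine Finset.prod_congr rfl (fun j _ => ?_)
    have h : j * ((l j : ℕ) : ZMod n) = (l j) • j := by rw [nsmul_eq_mul]; ring
    rw [h, AddChar.map_nsmul_eq_pow]
  -- step 2 : reindex product of geometric series over roots of unity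
  have hroots : ∏ x ∈ nthRootsFinset n (1 : ℂ), geomS x = ∏ j : ZMod n, geomS (χ j) := by
    symm
    refine Finset.prod_bij (fun (j : ZMod n) _ => χ j) ?_ ?_ ?_ ?_
    · intro j _
      rw [Polynomial.mem_nthRootsFinset hnpos]
      show χ j ^ n = 1
      rw [hχapp, ← pow_mul, mul_comm, pow_mul, hζ1, one_pow]
    · intro a _ b _ hab
      have hab' : χ a = χ b := hab
      rw [hχapp, hχapp] at hab'
      exact ZMod.val_injective n (hζ.pow_inj (ZMod.val_lt a) (ZMod.val_lt b) hab')
    · intro x hx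
      rw [Polynomial.mem_nthRootsFinset hnpos] at hx
      obtain ⟨i, hi, rfl⟩ := hζ.eq_pow_of_pow_eq_one hx
      refine ⟨(i : ZMod n), Finset.mem_univ _, ?_⟩
      show χ ((i : ZMod n)) = ζ ^ i
      rw [hχapp, ZMod.val_natCast_of_lt hi]
    · intro j _; rfl
  -- step 3 : the coefficient computation
  have hcoeff : ∑ l ∈ A, ∏ j : ZMod n, (χ j) ^ (l j)
      = (if n ∣ k then 1 else 0 : ℂ) := by
    have h1 : PowerSeries.coeff k (∏ j : ZMod n, geomS (χ j))
        = ∑ l ∈ A, ∏ j : ZMod n, (χ j) ^ (l j) := by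
      rw [PowerSeries.coeff_prod]
      exact Finset.sum_congr rfl fun l _ =>
        Finset.prod_congr rfl fun j _ => by simp [geomS]
    rw [← h1, ← hroots, prod_geomS_eq_indS hnpos hodd hζ]
    simp [indS]
  have hsum : ∑ l ∈ A, χ (wsum n ⇑l) = (if n ∣ k then 1 else 0 : ℂ) := by
    rw [Finset.sum_congr rfl (fun l _ => hstep1 l)]
    exact hcoeff
  -- step 4 : group by the value of the weighted sum
  have hfib : ∑ a : ZMod n, ∑ l ∈ A.filter (fun l : ZMod n →₀ ℕ => wsum n ⇑l = a),
        χ (wsum n ⇑l) = ∑ l ∈ A, χ (wsum n ⇑l) :=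
    Finset.sum_fiberwise_of_maps_to (fun l _ => Finset.mem_univ _) _
  have hconst : ∀ a : ZMod n,
      ∑ l ∈ A.filter (fun l : ZMod n →₀ ℕ => wsum n ⇑l = a), χ (wsum n ⇑l)
        = ((codeSet n k a).ncard : ℂ) * χ a := by
    intro a
    rw [Finset.sum_congr rfl (fun l hl => by rw [(Finset.mem_filter.1 hl).2]),
      Finset.sum_const, nsmul_eq_mul, codeSet_ncard (k := k) a]
  have hmain : ∑ a : ZMod n, ((codeSet n k a).ncard : ℂ) * χ a
      = (if n ∣ k then 1 else 0 : ℂ) := by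
    rw [← Finset.sum_congr rfl (fun a _ => hconst a), hfib, hsum]
  -- step 5 : character sum vanishes
  have hχne : χ ≠ 1 := by
    intro hc
    have h1 : χ (1 : ZMod n) = 1 := by rw [hc]; rfl
    rw [hχapp, ZMod.val_one, pow_one] at h1
    exact hζ.ne_one hn.one_lt h1
  have hvanish : ∑ a : ZMod n, χ a = 0 := AddChar.sum_eq_zero_of_ne_one hχne
  -- step 6 : split off the zero term
  have hsplit : ∑ a : ZMod n, ((codeSet n k a).ncard : ℂ) * χ a
      = ((codeSet n k 0).ncard : ℂ)
        + ((codeSet n k 1).ncard : ℂ) * (∑ a ∈ Finset.univ.erase 0, χ a) := by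
    rw [← Finset.add_sum_erase _ _ (Finset.mem_univ (0 : ZMod n))]
    rw [AddChar.map_zero_eq_one, mul_one, Finset.mul_sum]
    congr 1
    refine Finset.sum_congr rfl (fun a ha => ?_)
    rw [codeSet_ncard_scale hn (Finset.ne_of_mem_erase ha)]
  have herase : ∑ a ∈ Finset.univ.erase 0, χ a = -1 := by
    have h : χ 0 + ∑ a ∈ Finset.univ.erase 0, χ a = ∑ a : ZMod n, χ a :=
      Finset.add_sum_erase Finset.univ (fun a => χ a) (Finset.mem_univ (0 : ZMod n))
    rw [hvanish, AddChar.map_zero_eq_one] at h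
    linear_combination h
  have final : ((codeSet n k 0).ncard : ℂ)
      = ((codeSet n k 1).ncard : ℂ) + (if n ∣ k then 1 else 0 : ℂ) := by
    have := hmain
    rw [hsplit, herase] at this
    linear_combination this
  have : ((codeSet n k 0).ncard : ℂ)
      = (((codeSet n k 1).ncard + (if n ∣ k then 1 else 0) : ℕ) : ℂ) := by
    rw [final]
    push_cast
    split_ifs <;> simp
  exact_mod_cast this

end KeyCount
section Final

variable {n k : ℕ} [NeZero n]

lemma mem_orbit_isCode {f g : ZMod n → ℕ} (hf : IsCode n k f) (hg : g ∈ rotOrbit n f) :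
    IsCode n k g := by
  obtain ⟨t, rfl⟩ := (mem_rotOrbit_iff f g).1 hg
  exact isCode_shiftc k t f hf

end Final

/-- If `n` is an odd prime, there is a bijection between `N_{n,k}` and `F_{n,k,0}`,
the `(n,k)`-codes with weighted sum `0`. -/
theorem odd_prime_necklace_bijection (n k : ℕ) [NeZero n] (hk : 0 < k)
    (hprime : n.Prime) (hodd : Odd n) :
    Nonempty
      (necklaces n k ≃ {f : ZMod n → ℕ // IsCode n k f ∧ wsum n f = 0}) := by
  classical
  haveI : Fact n.Prime := ⟨hprime⟩
  -- finiteness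
  have hcodesFin : {f : ZMod n → ℕ | IsCode n k f}.Finite := codes_finite
  have hneckEq : necklaces n k = (rotOrbit n) '' {f | IsCode n k f} := by
    ext S
    constructor
    · rintro ⟨f, hf, rfl⟩; exact ⟨f, hf, rfl⟩
    · rintro ⟨f, hf, rfl⟩; exact ⟨f, hf, rfl⟩
  have hneckFin : (necklaces n k).Finite := hneckEq ▸ (hcodesFin.image _)
  haveI : Finite (necklaces n k) := hneckFin.to_subtype
  have hF0 : {f : ZMod n → ℕ | IsCode n k f ∧ wsum n f = 0} = codeSet n k 0 := rfl
  haveI : Finite {f : ZMod n → ℕ // IsCode n k f ∧ wsum n f = 0} :=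
    (codeSet_finite (k := k) (0 : ZMod n)).to_subtype
  haveI fintypeCodes : Fintype {f : ZMod n → ℕ // IsCode n k f} := hcodesFin.fintype
  haveI fintypeNeck : Fintype (necklaces n k) := hneckFin.fintype
  apply Finite.card_eq.1
  -- notation
  set T : ℕ := (Finset.finsuppAntidiag (Finset.univ : Finset (ZMod n)) k).card with hTdef
  set e : ℕ := if n ∣ k then 1 else 0 with hedef
  set c0 : ℕ := (codeSet n k 0).ncard with hc0def
  set c1 : ℕ := (codeSet n k 1).ncard with hc1def
  -- the F side: n * c0 + e = T + n * e
  have hsum_a : ∑ a : ZMod n, (codeSet n k a).ncard = T := by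
    rw [hTdef, Finset.card_eq_sum_card_fiberwise
      (f := fun l : ZMod n →₀ ℕ => wsum n ⇑l) (t := Finset.univ)
      (fun l _ => Finset.mem_univ _)]
    exact Finset.sum_congr rfl fun a _ => (codeSet_ncard (k := k) a)
  have hTsplit : T = c0 + (Finset.univ.erase (0 : ZMod n)).card * c1 := by
    rw [← hsum_a, ← Finset.add_sum_erase _ _ (Finset.mem_univ (0 : ZMod n))]
    congr 1
    rw [Finset.sum_congr rfl
      (fun a ha => codeSet_ncard_scale hprime (Finset.ne_of_mem_erase ha)),
      Finset.sum_const, smul_eq_mul]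
  have hcard_erase0 : (Finset.univ.erase (0 : ZMod n)).card + 1 = n := by
    rw [Finset.card_erase_of_mem (Finset.mem_univ _), Finset.card_univ, ZMod.card]
    have : 0 < n := hprime.pos
    omega
  have hc0c1 : c0 = c1 + e := codeSet_ncard_zero_eq hprime hodd
  have hFside : n * c0 + e = T + n * e := by
    obtain ⟨m, hm⟩ : ∃ m, (Finset.univ.erase (0 : ZMod n)).card = m := ⟨_, rfl⟩
    have hn' : n = m + 1 := by omega
    rw [hTsplit, hc0c1, hm, hn']
    ring
  -- the necklace side
  set π : {f : ZMod n → ℕ // IsCode n k f} → (necklaces n k) :=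
    fun f => ⟨rotOrbit n f.1, ⟨f.1, f.2, rfl⟩⟩ with hπdef
  have hfibers : Fintype.card {f : ZMod n → ℕ // IsCode n k f}
      = ∑ S : necklaces n k, (Finset.univ.filter (fun f => π f = S)).card := by
    rw [← Finset.card_univ, Finset.card_eq_sum_card_fiberwise
      (f := π) (t := Finset.univ) (fun f _ => Finset.mem_univ _)]
  have hcodecard : Fintype.card {f : ZMod n → ℕ // IsCode n k f} = T := by
    rw [← Nat.card_eq_fintype_card]
    have : Nat.card {f : ZMod n → ℕ // IsCode n k f}
        = {f : ZMod n → ℕ | IsCode n k f}.ncard := Nat.card_coe_set_eq _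
    rw [this, codes_ncard]
  have hfibcard : ∀ S : necklaces n k,
      (Finset.univ.filter (fun f => π f = S)).card = (S : Set (ZMod n → ℕ)).ncard := by
    intro S
    obtain ⟨g, hg, hSg⟩ := S.2
    have hbij : Function.Bijective
        (fun fp : {f : {f : ZMod n → ℕ // IsCode n k f} // π f = S} =>
          (⟨fp.1.1, by
            have h := congrArg Subtype.val fp.2
            have h' : rotOrbit n fp.1.1 = (S : Set (ZMod n → ℕ)) := h
            rw [← h']
            exact self_mem_rotOrbit _⟩ : (S : Set (ZMod n → ℕ)))) := by
      constructor
      · intro a b hab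
        have h' := congrArg Subtype.val hab
        exact Subtype.ext (Subtype.ext h')
      · rintro ⟨x, hx⟩
        have hxorb : x ∈ rotOrbit n g := by rw [hSg] at hx; exact hx
        have hxcode : IsCode n k x := mem_orbit_isCode hg hxorb
        refine ⟨⟨⟨x, hxcode⟩, ?_⟩, rfl⟩
        apply Subtype.ext
        show rotOrbit n x = (S : Set (ZMod n → ℕ))
        rw [hSg]
        exact rotOrbit_eq_iff_mem.2 hxorb
    have h1 : (Finset.univ.filter (fun f => π f = S)).card
        = Nat.card {f : {f : ZMod n → ℕ // IsCode n k f} // π f = S} := by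
      rw [Nat.card_eq_fintype_card, Fintype.card_subtype]
    rw [h1, Nat.card_eq_of_bijective _ hbij, Nat.card_coe_set_eq]
  have hneckside : n * (Fintype.card (necklaces n k)) + e = T + n * e := by
    by_cases hdvd : n ∣ k
    · -- the uniform code gives the unique singleton orbit
      have hUcode : IsCode n k (uniformCode n k) := uniformCode_isCode hdvd
      have hUconst : ∀ i j : ZMod n, uniformCode n k i = uniformCode n k j := fun _ _ => rfl
      set SU : necklaces n k := ⟨rotOrbit n (uniformCode n k), ⟨_, hUcode, rfl⟩⟩ with hSUdef
      have hSUcard : (SU : Set (ZMod n → ℕ)).ncard = 1 := by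
        show (rotOrbit n (uniformCode n k)).ncard = 1
        rw [rotOrbit_of_constant hUconst]
        exact Set.ncard_singleton _
      have hother : ∀ S : necklaces n k, S ≠ SU → (S : Set (ZMod n → ℕ)).ncard = n := by
        intro S hS
        obtain ⟨g, hg, hSg⟩ := S.2
        have hgnc : ¬ ∀ i j : ZMod n, g i = g j := by
          intro hc
          obtain ⟨-, hgu⟩ := constant_code_eq_uniform hg hc
          apply hS
          apply Subtype.ext
          show (S : Set (ZMod n → ℕ)) = rotOrbit n (uniformCode n k)
          rw [hSg, hgu]
        show (S : Set (ZMod n → ℕ)).ncard = n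
        rw [hSg]
        exact rotOrbit_ncard_of_nonconst hprime hgnc
      have hsumorb : T = 1 + (Finset.univ.erase SU).card * n := by
        rw [← hcodecard, hfibers,
          Finset.sum_congr rfl (fun S _ => hfibcard S),
          ← Finset.add_sum_erase _ _ (Finset.mem_univ SU), hSUcard,
          Finset.sum_congr rfl (fun S hS => hother S (Finset.ne_of_mem_erase hS)),
          Finset.sum_const, smul_eq_mul]
      have hq : (Finset.univ.erase SU).card + 1 = Fintype.card (necklaces n k) := by
        rw [Finset.card_erase_of_mem (Finset.mem_univ _), Finset.card_univ]
        have : 0 < Fintype.card (necklaces n k) := Fintype.card_pos_iff.2 ⟨SU⟩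
        omega
      obtain ⟨m, hm⟩ : ∃ m, (Finset.univ.erase SU).card = m := ⟨_, rfl⟩
      rw [hsumorb, hedef, if_pos hdvd, hm, ← hq, hm]
      ring
    · -- no singleton orbits
      have hall : ∀ S : necklaces n k, (S : Set (ZMod n → ℕ)).ncard = n := by
        intro S
        obtain ⟨g, hg, hSg⟩ := S.2
        have hgnc : ¬ ∀ i j : ZMod n, g i = g j := by
          intro hc
          exact hdvd (constant_code_eq_uniform hg hc).1
        show (S : Set (ZMod n → ℕ)).ncard = n
        rw [hSg]
        exact rotOrbit_ncard_of_nonconst hprime hgnc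
      have hsumorb : T = Fintype.card (necklaces n k) * n := by
        rw [← hcodecard, hfibers,
          Finset.sum_congr rfl (fun S _ => hfibcard S),
          Finset.sum_congr rfl (fun S _ => hall S),
          Finset.sum_const, smul_eq_mul, Finset.card_univ]
      rw [hsumorb, hedef, if_neg hdvd]
      ring
  -- conclude
  have hkey : Fintype.card (necklaces n k) = c0 := by
    have h1 := hneckside.trans hFside.symm
    have h2 : n * Fintype.card (necklaces n k) = n * c0 := Nat.add_right_cancel h1
    exact Nat.eq_of_mul_eq_mul_left hprime.pos h2
  have hWside : Nat.card {f : ZMod n → ℕ // IsCode n k f ∧ wsum n f = 0} = c0 := by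
    rw [hc0def]
    exact Nat.card_coe_set_eq _
  rw [Nat.card_eq_fintype_card, hkey, hWside]
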